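/- For the Fibonacci and Lucas numbers and every natural number n ≥ 1, Σ_{i=0}^{n} Fib(i)²·Luc(n−i)·Fib(n−i) = Fib(n)·( (n−1)·Fib(n+1) + (n+1)·Fib(n−1) ) / 5. -/

import Mathlib

noncomputable def fibR : ℕ → ℝ
  | 0 => 0
  | 1 => 1
  | n + 2 => fibR (n + 1) + fibR n

noncomputable def lucR : ℕ → ℝ
  | 0 => 2
  | 1 => 1
  | n + 2 => lucR (n + 1) + lucR n

lemma lucR_eq_fib (n : ℕ) : lucR n = 2 * fibR (n + 1) - fibR n := by
  induction n using Nat.twoStepInduction with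
  | zero => norm_num [lucR, fibR]
  | one => norm_num [lucR, fibR]
  | more n ih1 ih2 =>
    have f3 : fibR (n + 3) = fibR (n + 2) + fibR (n + 1) := by
      rw [show n + 3 = n + 1 + 2 from rfl, fibR]
    have f2 : fibR (n + 2) = fibR (n + 1) + fibR n := by rw [fibR]
    rw [lucR, ih1, ih2, show n + 2 + 1 = n + 3 from rfl, f3, f2]
    ring

noncomputable def gR (j : ℕ) : ℝ := lucR j * fibR j

lemma gR_rec (j : ℕ) : gR (j + 2) = 3 * gR (j + 1) - gR j := by
  simp only [gR, lucR_eq_fib]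
  rw [show j + 2 + 1 = j + 1 + 2 from rfl, fibR, fibR]
  ring

noncomputable def SR (n : ℕ) : ℝ :=
  ∑ i ∈ Finset.range (n + 1), fibR i ^ 2 * lucR (n - i) * fibR (n - i)

lemma SR_eq (n : ℕ) : SR n = ∑ i ∈ Finset.range (n + 1), fibR i ^ 2 * gR (n - i) := by
  unfold SR gR
  apply Finset.sum_congr rfl
  intro i _
  ring

lemma SR_rec (n : ℕ) : SR (n + 2) = 3 * SR (n + 1) - SR n + fibR (n + 1) ^ 2 := by
  have g0 : gR 0 = 0 := by simp [gR, fibR]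
  have g1 : gR 1 = 1 := by simp [gR, fibR, lucR]
  rw [SR_eq, SR_eq, SR_eq]
  rw [Finset.sum_range_succ, Finset.sum_range_succ]
  rw [Finset.sum_range_succ (n := n + 1)]
  simp only [Nat.sub_self, Nat.add_sub_cancel_left, Nat.add_sub_cancel]
  rw [show n + 2 - (n + 1) = 1 from by omega, g0, g1]
  have h1 : ∀ i ∈ Finset.range (n + 1), fibR i ^ 2 * gR (n + 2 - i)
      = 3 * (fibR i ^ 2 * gR (n + 1 - i)) - fibR i ^ 2 * gR (n - i) := by
    intro i hi
    rw [Finset.mem_range] at hi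
    have e2 : n + 2 - i = (n - i) + 2 := by omega
    have e1 : n + 1 - i = (n - i) + 1 := by omega
    rw [e2, e1, gR_rec]
    ring
  rw [Finset.sum_congr rfl h1, Finset.sum_sub_distrib, ← Finset.mul_sum]
  ring

noncomputable def RR (n : ℕ) : ℝ :=
  fibR n * (((n : ℝ) - 1) * fibR (n + 1) + ((n : ℝ) + 1) * fibR (n - 1)) / 5

lemma main_eq (n : ℕ) : SR n = RR n := by
  induction n using Nat.twoStepInduction with
  | zero =>
    simp [SR, RR, fibR]
  | one =>
    rw [SR, RR]
    simp [Finset.sum_range_succ, fibR, lucR]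
  | more n ih1 ih2 =>
    rw [SR_rec, ih1, ih2]
    match n with
    | 0 =>
      simp only [RR, fibR, lucR]
      norm_num [fibR]
    | m + 1 =>
      simp only [RR]
      have e1 : m + 1 - 1 = m := by omega
      have e2 : m + 1 + 1 - 1 = m + 1 := by omega
      have e3 : m + 1 + 2 - 1 = m + 2 := by omega
      rw [e1, e2, e3]
      have f2 : fibR (m + 2) = fibR (m + 1) + fibR m := by rw [fibR]
      have f3 : fibR (m + 3) = fibR (m + 2) + fibR (m + 1) := by rw [show m + 3 = m + 1 + 2 from rfl, fibR]
      have f4 : fibR (m + 4) = fibR (m + 3) + fibR (m + 2) := by rw [show m + 4 = m + 2 + 2 from rfl, fibR]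
      rw [show m + 1 + 2 = m + 3 from rfl, show m + 1 + 2 + 1 = m + 4 from rfl,
        show m + 1 + 1 = m + 2 from rfl]
      push_cast
      rw [f4, f3, f2]
      ring

theorem fib_luc_product_convolution (n : ℕ) (hn : 1 ≤ n) :
    ∑ i ∈ Finset.range (n + 1), fibR i ^ 2 * lucR (n - i) * fibR (n - i) =
      fibR n * (((n : ℝ) - 1) * fibR (n + 1) + ((n : ℝ) + 1) * fibR (n - 1)) / 5 := by
  have := main_eq n
  rwa [SR, RR] at this
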